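/- Let W ⊂ ℝ^d be a convex body of constant width 1, let p be a boundary point of W, and let n_i, n_j be outer normal vectors of supporting hyperplanes of W at p. Then (n_i · n_j)/(‖n_i‖·‖n_j‖) ≥ cos(π/3) = 1/2. -/

import Mathlib

open scoped RealInnerProductSpace

/-- `W` has constant width 1: for every unit direction the distance between the two
parallel supporting hyperplanes orthogonal to it equals 1. -/
def HasConstantWidthOne {d : ℕ} (W : Set (EuclideanSpace ℝ (Fin d))) : Prop :=
  ∀ u : EuclideanSpace ℝ (Fin d), ‖u‖ = 1 →
    sSup ((fun x => ⟪u, x⟫) '' W) - sInf ((fun x => ⟪u, x⟫) '' W) = 1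

/-- `n` is an outer normal (not necessarily unit) of a supporting hyperplane at `p`. -/
def IsOuterNormalAt {d : ℕ} (W : Set (EuclideanSpace ℝ (Fin d)))
    (p n : EuclideanSpace ℝ (Fin d)) : Prop :=
  n ≠ 0 ∧ ∀ x ∈ W, ⟪n, x⟫ ≤ ⟪n, p⟫

lemma diam_le_one {d : ℕ} (W : Set (EuclideanSpace ℝ (Fin d)))
    (hWc : IsCompact W) (hW : HasConstantWidthOne W)
    {x y : EuclideanSpace ℝ (Fin d)} (hx : x ∈ W) (hy : y ∈ W) :
    ‖x - y‖ ≤ 1 := by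
  rcases eq_or_ne x y with rfl | hne
  · simp
  have hnorm : (0:ℝ) < ‖x - y‖ := by
    simpa [sub_eq_zero] using hne
  set u : EuclideanSpace ℝ (Fin d) := ‖x - y‖⁻¹ • (x - y) with hu
  have hu1 : ‖u‖ = 1 := by
    rw [hu, norm_smul, norm_inv, norm_norm, inv_mul_cancel₀ hnorm.ne']
  have hbddA : BddAbove ((fun z => ⟪u, z⟫) '' W) :=
    (hWc.image (Continuous.inner continuous_const continuous_id)).bddAbove
  have hbddB : BddBelow ((fun z => ⟪u, z⟫) '' W) :=
    (hWc.image (Continuous.inner continuous_const continuous_id)).bddBelow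
  have h1 : ⟪u, x⟫ ≤ sSup ((fun z => ⟪u, z⟫) '' W) :=
    le_csSup hbddA ⟨x, hx, rfl⟩
  have h2 : sInf ((fun z => ⟪u, z⟫) '' W) ≤ ⟪u, y⟫ :=
    csInf_le hbddB ⟨y, hy, rfl⟩
  have h3 : ⟪u, x⟫ - ⟪u, y⟫ ≤ 1 := by
    have := hW u hu1
    linarith
  have h4 : ⟪u, x⟫ - ⟪u, y⟫ = ‖x - y‖ := by
    rw [← inner_sub_right, hu, real_inner_smul_left, real_inner_self_eq_norm_sq]
    field_simp
  linarith [h4 ▸ h3]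

lemma antipode_mem {d : ℕ} (W : Set (EuclideanSpace ℝ (Fin d)))
    (hWc : IsCompact W) (hW : HasConstantWidthOne W)
    {p u : EuclideanSpace ℝ (Fin d)} (hpW : p ∈ W) (hu1 : ‖u‖ = 1)
    (hsupp : ∀ x ∈ W, ⟪u, x⟫ ≤ ⟪u, p⟫) :
    p - u ∈ W := by
  have hne : W.Nonempty := ⟨p, hpW⟩
  have hsup : sSup ((fun z => ⟪u, z⟫) '' W) = ⟪u, p⟫ := by
    apply IsGreatest.csSup_eq
    exact ⟨⟨p, hpW, rfl⟩, fun a ⟨z, hz, hza⟩ => hza ▸ hsupp z hz⟩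
  have hcont : Continuous (fun z : EuclideanSpace ℝ (Fin d) => ⟪u, z⟫) :=
    Continuous.inner continuous_const continuous_id
  obtain ⟨q, hqW, hqmin⟩ := hWc.exists_isMinOn hne hcont.continuousOn
  have hinf : sInf ((fun z => ⟪u, z⟫) '' W) = ⟪u, q⟫ := by
    apply IsLeast.csInf_eq
    exact ⟨⟨q, hqW, rfl⟩, fun a ⟨z, hz, hza⟩ => hza ▸ hqmin hz⟩
  have hwidth := hW u hu1
  rw [hsup, hinf] at hwidth
  have hin : ⟪u, p - q⟫ = 1 := by rw [inner_sub_right]; linarith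
  have hd : ‖p - q‖ ≤ 1 := diam_le_one W hWc hW hpW hqW
  have hcs : ⟪u, p - q⟫ ≤ ‖u‖ * ‖p - q‖ := real_inner_le_norm u (p - q)
  have hdeq : ‖p - q‖ = 1 := by
    rw [hu1, one_mul] at hcs; linarith
  have heq : ⟪u, p - q⟫ = ‖u‖ * ‖p - q‖ := by rw [hu1, hdeq, hin]; norm_num
  have := (inner_eq_norm_mul_iff_real).mp heq
  rw [hu1, hdeq, one_smul, one_smul] at this
  rw [this]
  simpa using hqW

theorem normals_angle_le_pi_div_three {d : ℕ}
    (W : Set (EuclideanSpace ℝ (Fin d)))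
    (hWc : IsCompact W) (hWconv : Convex ℝ W) (hWint : (interior W).Nonempty)
    (hW : HasConstantWidthOne W)
    (p : EuclideanSpace ℝ (Fin d)) (hp : p ∈ frontier W)
    (ni nj : EuclideanSpace ℝ (Fin d))
    (hni : IsOuterNormalAt W p ni) (hnj : IsOuterNormalAt W p nj) :
    (1 : ℝ) / 2 ≤ ⟪ni, nj⟫ / (‖ni‖ * ‖nj‖) := by
  have hpW : p ∈ W := by
    have := hp.1
    rwa [hWc.isClosed.closure_eq] at this
  obtain ⟨hni0, hniS⟩ := hni
  obtain ⟨hnj0, hnjS⟩ := hnj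
  have hnin : (0:ℝ) < ‖ni‖ := norm_pos_iff.mpr hni0
  have hnjn : (0:ℝ) < ‖nj‖ := norm_pos_iff.mpr hnj0
  set u : EuclideanSpace ℝ (Fin d) := ‖ni‖⁻¹ • ni with hudef
  set v : EuclideanSpace ℝ (Fin d) := ‖nj‖⁻¹ • nj with hvdef
  have hu1 : ‖u‖ = 1 := by
    rw [hudef, norm_smul, norm_inv, norm_norm, inv_mul_cancel₀ hnin.ne']
  have hv1 : ‖v‖ = 1 := by
    rw [hvdef, norm_smul, norm_inv, norm_norm, inv_mul_cancel₀ hnjn.ne']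
  have husupp : ∀ x ∈ W, ⟪u, x⟫ ≤ ⟪u, p⟫ := by
    intro x hx
    rw [hudef, real_inner_smul_left, real_inner_smul_left]
    exact mul_le_mul_of_nonneg_left (hniS x hx) (inv_nonneg.mpr hnin.le)
  have hvsupp : ∀ x ∈ W, ⟪v, x⟫ ≤ ⟪v, p⟫ := by
    intro x hx
    rw [hvdef, real_inner_smul_left, real_inner_smul_left]
    exact mul_le_mul_of_nonneg_left (hnjS x hx) (inv_nonneg.mpr hnjn.le)
  have hqu : p - u ∈ W := antipode_mem W hWc hW hpW hu1 husupp
  have hqv : p - v ∈ W := antipode_mem W hWc hW hpW hv1 hvsupp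
  have hd : ‖(p - u) - (p - v)‖ ≤ 1 := diam_le_one W hWc hW hqu hqv
  have hd2 : ‖v - u‖ ≤ 1 := by simpa [sub_sub_sub_cancel_left] using hd
  have hsq : ‖v - u‖ ^ 2 ≤ 1 := by
    nlinarith [norm_nonneg (v - u)]
  have hexp : ‖v - u‖ ^ 2 = 2 - 2 * ⟪u, v⟫ := by
    rw [← real_inner_self_eq_norm_sq, inner_sub_sub_self]
    rw [real_inner_comm v u]
    have : ⟪v, v⟫ = 1 := by rw [real_inner_self_eq_norm_sq, hv1]; norm_num
    have hu' : ⟪u, u⟫ = 1 := by rw [real_inner_self_eq_norm_sq, hu1]; norm_num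
    rw [this, hu']; ring
  have huv : (1:ℝ)/2 ≤ ⟪u, v⟫ := by linarith [hexp ▸ hsq]
  have : ⟪u, v⟫ = ⟪ni, nj⟫ / (‖ni‖ * ‖nj‖) := by
    rw [hudef, hvdef, real_inner_smul_left, real_inner_smul_right]
    field_simp
  linarith [this ▸ huv]
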